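/- Let C be a convex subset of ℝ^n and f : ℝ^n → ℝ^m a differentiable function. Suppose that for every nonzero sign vector s ∈ {-1,0,1}^n \ {0} there exists a differentiable function π : ℝ^m → ℝ such that for every coordinate i with s_i ≠ 0, the partial derivative ∂(π ∘ f)/∂x_i is strictly positive on all of C if s_i = 1 and strictly negative on all of C if s_i = -1. Then f restricted to C is injective. -/

import Mathlib

theorem stmt1 {n m : ℕ} (C : Set (Fin n → ℝ)) (hC : Convex ℝ C)
    (f : (Fin n → ℝ) → (Fin m → ℝ)) (hf : Differentiable ℝ f)
    (h : ∀ s : Fin n → ℤ, (∀ i, s i = -1 ∨ s i = 0 ∨ s i = 1) → (∃ i, s i ≠ 0) →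
      ∃ π : (Fin m → ℝ) → ℝ, Differentiable ℝ π ∧
        ∀ i, (s i = 1 → ∀ p ∈ C, 0 < fderiv ℝ (π ∘ f) p (Pi.single i 1)) ∧
             (s i = -1 → ∀ p ∈ C, fderiv ℝ (π ∘ f) p (Pi.single i 1) < 0)) :
    Set.InjOn f C := by
  intro x hx y hy hfxy
  by_contra hne
  set v : Fin n → ℝ := y - x with hv
  have hvne : ∃ i, v i ≠ 0 := by
    by_contra hall
    push_neg at hall
    apply hne
    funext i
    have := hall i
    simp [hv, sub_eq_zero] at this
    simp [this]
  set s : Fin n → ℤ := fun i => if 0 < v i then 1 else if v i < 0 then -1 else 0 with hs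
  have hs01 : ∀ i, s i = -1 ∨ s i = 0 ∨ s i = 1 := by
    intro i; simp only [hs]; split_ifs <;> simp
  have hsne : ∃ i, s i ≠ 0 := by
    obtain ⟨i, hi⟩ := hvne
    refine ⟨i, ?_⟩
    rcases lt_or_gt_of_ne hi with h' | h' <;> simp [hs, h', not_lt.2 h'.le, asymm h']
  obtain ⟨π, hπ, hπd⟩ := h s hs01 hsne
  have hπf : Differentiable ℝ (π ∘ f) := hπ.comp hf
  -- curve
  set γ : ℝ → (Fin n → ℝ) := fun t => x + t • v with hγ
  have hγC : ∀ t ∈ Set.Icc (0:ℝ) 1, γ t ∈ C := fun t ht =>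
    hC.add_smul_sub_mem hx hy ht
  set g : ℝ → ℝ := fun t => π (f (γ t)) with hg
  have hderiv : ∀ t : ℝ, HasDerivAt g (fderiv ℝ (π ∘ f) (γ t) v) t := by
    intro t
    have hγd : HasDerivAt γ v t := by
      have : HasDerivAt (fun t : ℝ => t • v) ((1:ℝ) • v) t := (hasDerivAt_id t).smul_const v
      simpa only [one_smul] using this.const_add x
    exact ((hπf (γ t)).hasFDerivAt.comp_hasDerivAt t hγd)
  -- positivity of derivative on C points
  have hpos : ∀ t ∈ Set.Icc (0:ℝ) 1, 0 < fderiv ℝ (π ∘ f) (γ t) v := by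
    intro t ht
    have hp := hγC t ht
    set L := fderiv ℝ (π ∘ f) (γ t) with hL
    have hvsum : v = ∑ i, v i • (Pi.single i 1 : Fin n → ℝ) := by
      funext j
      simp [Finset.sum_apply, Pi.single_apply, Finset.sum_ite_eq']
    have : L v = ∑ i, v i * L (Pi.single i 1) := by
      conv_lhs => rw [hvsum]
      simp [map_sum, map_smul]
    rw [this]
    obtain ⟨i₀, hi₀⟩ := hvne
    have hterm : ∀ i, 0 ≤ v i * L (Pi.single i 1) := by
      intro i
      rcases lt_trichotomy (v i) 0 with h' | h' | h'
      · have hsi : s i = -1 := by simp [hs, h', asymm h']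
        exact le_of_lt (mul_pos_of_neg_of_neg h' ((hπd i).2 hsi _ hp))
      · simp [h']
      · have hsi : s i = 1 := by simp [hs, h']
        exact le_of_lt (mul_pos h' ((hπd i).1 hsi _ hp))
    have hterm0 : 0 < v i₀ * L (Pi.single i₀ 1) := by
      rcases lt_or_gt_of_ne hi₀ with h' | h'
      · have hsi : s i₀ = -1 := by simp [hs, h', asymm h']
        exact mul_pos_of_neg_of_neg h' ((hπd i₀).2 hsi _ hp)
      · have hsi : s i₀ = 1 := by simp [hs, h']
        exact mul_pos h' ((hπd i₀).1 hsi _ hp)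
    exact Finset.sum_pos' (fun i _ => hterm i) ⟨i₀, Finset.mem_univ _, hterm0⟩
  have hmono : StrictMonoOn g (Set.Icc 0 1) := by
    apply strictMonoOn_of_deriv_pos (convex_Icc 0 1)
    · exact (Continuous.continuousOn (by
        have : Differentiable ℝ g := fun t => (hderiv t).differentiableAt
        exact this.continuous))
    · intro t ht
      rw [interior_Icc] at ht
      rw [(hderiv t).deriv]
      exact hpos t ⟨ht.1.le, ht.2.le⟩
  have h01 : g 0 < g 1 := hmono (Set.left_mem_Icc.2 zero_le_one)
    (Set.right_mem_Icc.2 zero_le_one) zero_lt_one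
  have : g 0 = g 1 := by
    simp [hg, hγ, hv, hfxy]
  linarith
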